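/- For every n ≥ 2, the set of 3n-permutations avoiding {231, 312, 321} with π(3i+1) < π(3i+2), π(3i+1) < π(3i+3) for all i equals the set of permutations of the form 1 ⊕ τ ⊕ π'_{[2,3n-3]} where τ ∈ {123, 132, 213} and π' ranges over the corresponding set of (3n-3)-permutations (with π'_{[2,3n-3]} denoting the factor of π' from position 2 onward); for n = 1 the set equals {123, 132}. -/

import Mathlib

set_option maxRecDepth 8000
set_option maxHeartbeats 1000000


/-- `π` contains the pattern `p` (given 0-based, as a function `Fin m → Fin m`). -/
def ContainsPat {m n : ℕ} (p : Fin m → Fin m) (π : Equiv.Perm (Fin n)) : Prop :=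
  ∃ f : Fin m → Fin n, StrictMono f ∧ ∀ a b : Fin m, p a < p b ↔ π (f a) < π (f b)

/-- The set `𝒫_{3n}`: permutations of `[3n]` avoiding 231, 312, 321 with
(1-based) `π(3i+1) < π(3i+2)` and `π(3i+1) < π(3i+3)` for all `0 ≤ i ≤ n-1`. -/
def InShrub (n : ℕ) (π : Equiv.Perm (Fin (3 * n))) : Prop :=
  (¬ ContainsPat ![1, 2, 0] π) ∧ (¬ ContainsPat ![2, 0, 1] π) ∧
  (¬ ContainsPat ![2, 1, 0] π) ∧
  ∀ (i : ℕ) (h : 3 * i + 2 < 3 * n),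
    π ⟨3 * i, by omega⟩ < π ⟨3 * i + 1, by omega⟩ ∧
    π ⟨3 * i, by omega⟩ < π ⟨3 * i + 2, h⟩

/-- For `n = 1`, `𝒫_3 = {123, 132}`; for `n ≥ 2`, `𝒫_{3n}` consists exactly of the
permutations `1 ⊕ τ ⊕ π'_{[2,3n-3]}` with `τ ∈ {123, 132, 213}` and `π' ∈ 𝒫_{3(n-1)}`
(0-based: value 0 at position 0, `τ` shifted by 1 on positions 1–3, and the factor
of `π'` from its second position onward, shifted by 3, on the remaining positions). -/
def Qprop {N : ℕ} (π : Equiv.Perm (Fin N)) : Prop :=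
  ∀ i k : Fin N, (i : ℕ) + 2 ≤ (k : ℕ) → (π i : ℕ) < (π k : ℕ)

lemma piApCongr {N : ℕ} (π : Equiv.Perm (Fin N)) {a b : ℕ} (ha : a < N) (hb : b < N)
    (h : a = b) : (π ⟨a, ha⟩ : ℕ) = (π ⟨b, hb⟩ : ℕ) := by subst h; rfl

lemma piApInj {N : ℕ} (π : Equiv.Perm (Fin N)) {a b : ℕ} {ha : a < N} {hb : b < N}
    (h : (π ⟨a, ha⟩ : ℕ) = (π ⟨b, hb⟩ : ℕ)) : a = b :=
  congrArg Fin.val (π.injective (Fin.ext h))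

lemma contains_231 {N : ℕ} (π : Equiv.Perm (Fin N)) (i j k : Fin N)
    (h1 : (i:ℕ) < j) (h2 : (j:ℕ) < k)
    (hv1 : (π k : ℕ) < π i) (hv2 : (π i : ℕ) < π j) : ContainsPat ![1,2,0] π := by
  refine ⟨![i,j,k], ?_, ?_⟩
  · intro a b hab
    fin_cases a <;> fin_cases b <;>
      simp only [Matrix.cons_val_zero, Matrix.cons_val_one, Matrix.head_cons, Fin.mk_one,
        Matrix.cons_val_two, Matrix.tail_cons, Fin.zero_eta, Fin.mk_zero, Fin.lt_def,
        Fin.reduceFinMk] <;> first | omega | (exfalso; exact absurd hab (by decide))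
  · intro a b
    fin_cases a <;> fin_cases b <;>
      simp only [Matrix.cons_val_zero, Matrix.cons_val_one, Matrix.head_cons, Fin.mk_one,
        Matrix.cons_val_two, Matrix.tail_cons, Fin.zero_eta, Fin.mk_zero, Fin.lt_def,
        Fin.reduceFinMk] <;>
      constructor <;> intro h <;> first | omega | (exact absurd h (by decide)) | decide

lemma contains_312 {N : ℕ} (π : Equiv.Perm (Fin N)) (i j k : Fin N)
    (h1 : (i:ℕ) < j) (h2 : (j:ℕ) < k)
    (hv1 : (π j : ℕ) < π k) (hv2 : (π k : ℕ) < π i) : ContainsPat ![2,0,1] π := by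
  refine ⟨![i,j,k], ?_, ?_⟩
  · intro a b hab
    fin_cases a <;> fin_cases b <;>
      simp only [Matrix.cons_val_zero, Matrix.cons_val_one, Matrix.head_cons, Fin.mk_one,
        Matrix.cons_val_two, Matrix.tail_cons, Fin.zero_eta, Fin.mk_zero, Fin.lt_def,
        Fin.reduceFinMk] <;> first | omega | (exfalso; exact absurd hab (by decide))
  · intro a b
    fin_cases a <;> fin_cases b <;>
      simp only [Matrix.cons_val_zero, Matrix.cons_val_one, Matrix.head_cons, Fin.mk_one,
        Matrix.cons_val_two, Matrix.tail_cons, Fin.zero_eta, Fin.mk_zero, Fin.lt_def,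
        Fin.reduceFinMk] <;>
      constructor <;> intro h <;> first | omega | (exact absurd h (by decide)) | decide

lemma contains_321 {N : ℕ} (π : Equiv.Perm (Fin N)) (i j k : Fin N)
    (h1 : (i:ℕ) < j) (h2 : (j:ℕ) < k)
    (hv1 : (π k : ℕ) < π j) (hv2 : (π j : ℕ) < π i) : ContainsPat ![2,1,0] π := by
  refine ⟨![i,j,k], ?_, ?_⟩
  · intro a b hab
    fin_cases a <;> fin_cases b <;>
      simp only [Matrix.cons_val_zero, Matrix.cons_val_one, Matrix.head_cons, Fin.mk_one,
        Matrix.cons_val_two, Matrix.tail_cons, Fin.zero_eta, Fin.mk_zero, Fin.lt_def,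
        Fin.reduceFinMk] <;> first | omega | (exfalso; exact absurd hab (by decide))
  · intro a b
    fin_cases a <;> fin_cases b <;>
      simp only [Matrix.cons_val_zero, Matrix.cons_val_one, Matrix.head_cons, Fin.mk_one,
        Matrix.cons_val_two, Matrix.tail_cons, Fin.zero_eta, Fin.mk_zero, Fin.lt_def,
        Fin.reduceFinMk] <;>
      constructor <;> intro h <;> first | omega | (exact absurd h (by decide)) | decide

lemma avoid_iff {N : ℕ} (π : Equiv.Perm (Fin N)) :
    ((¬ ContainsPat ![1, 2, 0] π) ∧ (¬ ContainsPat ![2, 0, 1] π) ∧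
      (¬ ContainsPat ![2, 1, 0] π)) ↔ Qprop π := by
  constructor
  · rintro ⟨h1, h2, h3⟩ i k hik
    by_contra hc
    have hkN := k.isLt
    set j : Fin N := ⟨(i:ℕ)+1, by omega⟩ with hj
    have hji : ((i:ℕ)) < (j:ℕ) := by simp [hj]
    have hjk : ((j:ℕ)) < (k:ℕ) := by simp [hj]; omega
    have hik' : (π k : ℕ) < π i := by
      rcases Nat.lt_trichotomy (π i : ℕ) (π k : ℕ) with h | h | h
      · omega
      · exact absurd (congrArg Fin.val (π.injective (Fin.ext h))) (by omega)
      · exact h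
    rcases Nat.lt_trichotomy (π j : ℕ) (π k : ℕ) with h | h | h
    · exact h2 (contains_312 π i j k hji hjk h hik')
    · exact absurd (congrArg Fin.val (π.injective (Fin.ext h))) (by omega)
    · rcases Nat.lt_trichotomy (π j : ℕ) (π i : ℕ) with h' | h' | h'
      · exact h3 (contains_321 π i j k hji hjk h h')
      · exact absurd (congrArg Fin.val (π.injective (Fin.ext h'))) (by omega)
      · exact h1 (contains_231 π i j k hji hjk hik' h')
  · intro hQ
    have key : ∀ p : Fin 3 → Fin 3, p 2 < p 0 → ¬ ContainsPat p π := by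
      rintro p hp ⟨f, hf, hord⟩
      have h01 : f 0 < f 1 := hf (by decide)
      have h12 : f 1 < f 2 := hf (by decide)
      have hQ' := hQ (f 0) (f 2) (by
        have a1 := Fin.lt_def.mp h01; have a2 := Fin.lt_def.mp h12; omega)
      have := Fin.lt_def.mp ((hord 2 0).mp hp)
      omega
    refine ⟨key _ (by decide), key _ (by decide), key _ (by decide)⟩

lemma inShrub_iff (n : ℕ) (π : Equiv.Perm (Fin (3*n))) :
    InShrub n π ↔ (Qprop π ∧ ∀ (i : ℕ) (h : 3*i+2 < 3*n),
      π ⟨3*i, by omega⟩ < π ⟨3*i+1, by omega⟩ ∧ π ⟨3*i, by omega⟩ < π ⟨3*i+2, h⟩) := by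
  rw [← avoid_iff π]
  exact ⟨fun ⟨a,b,c,d⟩ => ⟨⟨a,b,c⟩,d⟩, fun ⟨⟨a,b,c⟩,d⟩ => ⟨a,b,c,d⟩⟩

lemma val_zero {n : ℕ} (hn : 1 ≤ n) (π : Equiv.Perm (Fin (3*n))) (h : InShrub n π) :
    ∀ (h0 : 0 < 3*n), (π ⟨0, h0⟩ : ℕ) = 0 := by
  intro h0
  obtain ⟨hQ, hB⟩ := (inShrub_iff n π).mp h
  by_contra hne
  set z := π.symm ⟨0, h0⟩ with hz
  have hπz : (π ⟨(z:ℕ), z.isLt⟩ : ℕ) = 0 := by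
    have e : (⟨(z:ℕ), z.isLt⟩ : Fin (3*n)) = z := rfl
    rw [e, hz, Equiv.apply_symm_apply]
  have hz0 : (z:ℕ) ≠ 0 := by
    intro h'
    exact hne ((piApCongr π h0 z.isLt h'.symm).trans hπz)
  rcases (by omega : (z:ℕ) = 1 ∨ (z:ℕ) = 2 ∨ 3 ≤ (z:ℕ)) with h1 | h2 | h3
  · have hlt := Fin.lt_def.mp (hB 0 (by omega)).1
    have e1 := piApCongr π (show 3*0 < 3*n by omega) h0 (by omega)
    have e2 := piApCongr π (show 3*0+1 < 3*n by omega) z.isLt (by omega)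
    omega
  · have hlt := Fin.lt_def.mp (hB 0 (by omega)).2
    have e1 := piApCongr π (show 3*0 < 3*n by omega) h0 (by omega)
    have e2 := piApCongr π (show 3*0+2 < 3*n by omega) z.isLt (by omega)
    omega
  · have := hQ ⟨0, h0⟩ ⟨(z:ℕ), z.isLt⟩ (by simpa using by omega)
    omega

lemma fin_val_mk {N a : ℕ} (h : a < N) : ((⟨a, h⟩ : Fin N) : ℕ) = a := rfl

lemma case_n1 (π : Equiv.Perm (Fin (3 * 1))) :
      InShrub 1 π ↔ ((∀ i, π i = i) ∨
        ∀ i : Fin (3 * 1), (π i : ℕ) =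
          if (i : ℕ) = 0 then 0 else if (i : ℕ) = 1 then 2 else 1) := by
  constructor
  · intro h
    obtain ⟨hQ, hB⟩ := (inShrub_iff 1 π).mp h
    have l1 := Fin.lt_def.mp (hB 0 (by omega)).1
    have l2 := Fin.lt_def.mp (hB 0 (by omega)).2
    have e0 := piApCongr π (show 3*0 < 3*1 by omega) (show 0 < 3*1 by omega) (by omega)
    have e1 := piApCongr π (show 3*0+1 < 3*1 by omega) (show 1 < 3*1 by omega) (by omega)
    have e2 := piApCongr π (show 3*0+2 < 3*1 by omega) (show 2 < 3*1 by omega) (by omega)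
    have b0 := (π (⟨0, by omega⟩ : Fin (3*1))).isLt
    have b1 := (π (⟨1, by omega⟩ : Fin (3*1))).isLt
    have b2 := (π (⟨2, by omega⟩ : Fin (3*1))).isLt
    have d01 : (π (⟨0, by omega⟩ : Fin (3*1)) : ℕ) ≠ (π (⟨1, by omega⟩ : Fin (3*1)) : ℕ) :=
      fun hc => by have := piApInj π hc; omega
    have d02 : (π (⟨0, by omega⟩ : Fin (3*1)) : ℕ) ≠ (π (⟨2, by omega⟩ : Fin (3*1)) : ℕ) :=
      fun hc => by have := piApInj π hc; omega
    have d12 : (π (⟨1, by omega⟩ : Fin (3*1)) : ℕ) ≠ (π (⟨2, by omega⟩ : Fin (3*1)) : ℕ) :=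
      fun hc => by have := piApInj π hc; omega
    rcases (by omega : (π (⟨1, by omega⟩ : Fin (3*1)) : ℕ) = 1 ∨ (π (⟨1, by omega⟩ : Fin (3*1)) : ℕ) = 2) with hc | hc
    · left
      intro i
      obtain ⟨iv, hiv⟩ := i
      refine Fin.ext ?_
      rcases (by omega : iv = 0 ∨ iv = 1 ∨ iv = 2) with rfl | rfl | rfl
      · show (π ⟨0, hiv⟩ : ℕ) = 0; omega
      · show (π ⟨1, hiv⟩ : ℕ) = 1; omega
      · show (π ⟨2, hiv⟩ : ℕ) = 2; omega
    · right
      intro i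
      obtain ⟨iv, hiv⟩ := i
      rcases (by omega : iv = 0 ∨ iv = 1 ∨ iv = 2) with rfl | rfl | rfl
      · show (π ⟨0, hiv⟩ : ℕ) = 0; omega
      · show (π ⟨1, hiv⟩ : ℕ) = 2; omega
      · show (π ⟨2, hiv⟩ : ℕ) = 1; omega
  · intro h
    apply (inShrub_iff 1 π).mpr
    rcases h with h | h
    · constructor
      · intro i k hik
        rw [h i, h k]; omega
      · intro i hi
        obtain rfl : i = 0 := by omega
        rw [h ⟨3*0, by omega⟩, h ⟨3*0+1, by omega⟩, h ⟨3*0+2, by omega⟩]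
        constructor <;> rw [Fin.lt_def]
        · show (3*0:ℕ) < 3*0+1; omega
        · show (3*0:ℕ) < 3*0+2; omega
    · have ha : (π ⟨0, by omega⟩ : ℕ) = 0 := by
        have := h ⟨0, by omega⟩; rwa [if_pos (show ((⟨0, by omega⟩ : Fin (3*1)) : ℕ) = 0 from rfl)] at this
      have hb : (π ⟨1, by omega⟩ : ℕ) = 2 := by
        have := h ⟨1, by omega⟩
        rwa [if_neg (show ¬((⟨1, by omega⟩ : Fin (3*1)) : ℕ) = 0 by norm_num [fin_val_mk]),
          if_pos (show ((⟨1, by omega⟩ : Fin (3*1)) : ℕ) = 1 from rfl)] at this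
      have hc : (π ⟨2, by omega⟩ : ℕ) = 1 := by
        have := h ⟨2, by omega⟩
        rwa [if_neg (show ¬((⟨2, by omega⟩ : Fin (3*1)) : ℕ) = 0 by norm_num [fin_val_mk]),
          if_neg (show ¬((⟨2, by omega⟩ : Fin (3*1)) : ℕ) = 1 by norm_num [fin_val_mk])] at this
      constructor
      · intro i k hik
        obtain ⟨iv, hiv⟩ := i
        obtain ⟨kv, hkv⟩ := k
        rw [fin_val_mk, fin_val_mk] at hik
        obtain ⟨rfl, rfl⟩ : iv = 0 ∧ kv = 2 := by omega
        show (π ⟨0, hiv⟩ : ℕ) < (π ⟨2, hkv⟩ : ℕ)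
        omega
      · intro i hi
        obtain rfl : i = 0 := by omega
        constructor <;> rw [Fin.lt_def]
        · show (π ⟨3*0, by omega⟩ : ℕ) < (π ⟨3*0+1, by omega⟩ : ℕ)
          have u := piApCongr π (show 3*0 < 3*1 by omega) (show 0 < 3*1 by omega) (by omega)
          have v := piApCongr π (show 3*0+1 < 3*1 by omega) (show 1 < 3*1 by omega) (by omega)
          omega
        · show (π ⟨3*0, by omega⟩ : ℕ) < (π ⟨3*0+2, by omega⟩ : ℕ)
          have u := piApCongr π (show 3*0 < 3*1 by omega) (show 0 < 3*1 by omega) (by omega)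
          have v := piApCongr π (show 3*0+2 < 3*1 by omega) (show 2 < 3*1 by omega) (by omega)
          omega

def gfun (n : ℕ) (hn : 2 ≤ n) (π : Equiv.Perm (Fin (3 * n))) :
    Fin (3*(n-1)) → Fin (3*(n-1)) := fun j =>
  if (j:ℕ) = 0 then ⟨0, by omega⟩
  else ⟨(π ⟨(j:ℕ)+3, by have := j.isLt; omega⟩ : ℕ) - 3,
    by have := (π ⟨(j:ℕ)+3, by have := j.isLt; omega⟩).isLt; omega⟩

lemma gfun_val0 (n : ℕ) (hn : 2 ≤ n) (π : Equiv.Perm (Fin (3 * n)))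
    (a : ℕ) (haM : a < 3*(n-1)) (ha0 : a = 0) :
    (gfun n hn π ⟨a, haM⟩ : ℕ) = 0 := by
  unfold gfun
  rw [if_pos (show ((⟨a, haM⟩ : Fin (3*(n-1))):ℕ) = 0 from ha0)]

lemma gfun_valpos (n : ℕ) (hn : 2 ≤ n) (π : Equiv.Perm (Fin (3 * n)))
    (a b : ℕ) (haM : a < 3*(n-1)) (ha0 : a ≠ 0) (hb : b < 3*n) (hab : b = a+3) :
    (gfun n hn π ⟨a, haM⟩ : ℕ) = (π ⟨b, hb⟩ : ℕ) - 3 := by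
  unfold gfun
  rw [if_neg (show ¬((⟨a, haM⟩ : Fin (3*(n-1))):ℕ) = 0 from ha0)]
  exact congrArg (· - 3) (piApCongr π (by omega) hb (by rw [fin_val_mk]; omega))

lemma forward_n2 (n : ℕ) (hn : 2 ≤ n) (π : Equiv.Perm (Fin (3 * n))) (hπ : InShrub n π) :
    ∃ τ : Equiv.Perm (Fin 3),
          (τ = Equiv.refl (Fin 3) ∨ τ = Equiv.swap 1 2 ∨ τ = Equiv.swap 0 1) ∧
          ∃ π' : Equiv.Perm (Fin (3 * (n - 1))), InShrub (n - 1) π' ∧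
            (π ⟨0, by have := π; omega⟩ : ℕ) = 0 ∧
            (∀ a : Fin 3, (π ⟨(a : ℕ) + 1, Nat.lt_of_lt_of_le (Nat.succ_lt_succ a.isLt) (by omega)⟩ : ℕ) = (τ a : ℕ) + 1) ∧
            ∀ (j : ℕ) (hj1 : 1 ≤ j) (hj2 : j < 3 * (n - 1)),
              (π ⟨j + 3, by have := π; omega⟩ : ℕ) = (π' ⟨j, hj2⟩ : ℕ) + 3 := by
  obtain ⟨hQ, hB⟩ := (inShrub_iff n π).mp hπ
  have hQ' : ∀ (a b : ℕ) (ha : a < 3*n) (hb : b < 3*n), a + 2 ≤ b →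
      (π ⟨a,ha⟩ : ℕ) < (π ⟨b,hb⟩ : ℕ) := fun a b ha hb h => hQ ⟨a,ha⟩ ⟨b,hb⟩ h
  have hBn : ∀ (i : ℕ) (h2 : 3*i+2 < 3*n) (ha : 3*i < 3*n) (hb : 3*i+1 < 3*n),
      (π ⟨3*i, ha⟩:ℕ) < (π ⟨3*i+1, hb⟩:ℕ) ∧ (π ⟨3*i, ha⟩:ℕ) < (π ⟨3*i+2, h2⟩:ℕ) := by
    intro i h2 ha hb
    exact ⟨Fin.lt_def.mp (hB i h2).1, Fin.lt_def.mp (hB i h2).2⟩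
  have h0 : (π ⟨0, by omega⟩ : ℕ) = 0 := val_zero (by omega) π hπ (by omega)
  have h4 : ∀ (k : ℕ) (hk : k < 3*n), 4 ≤ k →
      (π ⟨1, by omega⟩ : ℕ) < π ⟨k, hk⟩ ∧ (π ⟨2, by omega⟩:ℕ) < π ⟨k,hk⟩ ∧
      (π ⟨3, by omega⟩:ℕ) < π ⟨k,hk⟩ := by
    intro k hk hk4
    refine ⟨hQ' 1 k (by omega) hk (by omega), hQ' 2 k (by omega) hk (by omega), ?_⟩
    rcases Nat.lt_or_ge k 5 with h5 | h5
    · obtain rfl : k = 4 := by omega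
      have hlt := (hBn 1 (by omega) (by omega) (by omega)).1
      have e1 := piApCongr π (show 3*1 < 3*n by omega) (show 3 < 3*n by omega) (by omega)
      have e2 := piApCongr π (show 3*1+1 < 3*n by omega) hk (by omega)
      omega
    · exact hQ' 3 k (by omega) hk (by omega)
  have hne0 : ∀ (a : ℕ) (ha : a < 3*n), a ≠ 0 → (π ⟨a,ha⟩ : ℕ) ≠ 0 := by
    intro a ha ha0 hv
    exact ha0 (piApInj π (hv.trans h0.symm))
  have hsmall : ∀ (m : ℕ), 1 ≤ m → m ≤ 3 →
      ∃ (j : ℕ) (hj : j < 3*n), 1 ≤ j ∧ j ≤ 3 ∧ (π ⟨j,hj⟩ : ℕ) = m := by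
    intro m h1m hm3
    set p := π.symm ⟨m, by omega⟩ with hp
    have hpv : (π ⟨(p:ℕ), p.isLt⟩ : ℕ) = m := by
      have e : (⟨(p:ℕ), p.isLt⟩ : Fin (3*n)) = p := rfl
      rw [e, hp, Equiv.apply_symm_apply, fin_val_mk]
    refine ⟨(p:ℕ), p.isLt, ?_, ?_, hpv⟩
    · rcases Nat.eq_zero_or_pos (p:ℕ) with hz | hz
      · exfalso
        have := piApCongr π p.isLt (show 0 < 3*n by omega) hz
        omega
      · omega
    · by_contra hgt
      have h44 := h4 (p:ℕ) p.isLt (by omega)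
      have d12 : (π ⟨1, by omega⟩:ℕ) ≠ (π ⟨2, by omega⟩:ℕ) := fun hc => by have := piApInj π hc; omega
      have d13 : (π ⟨1, by omega⟩:ℕ) ≠ (π ⟨3, by omega⟩:ℕ) := fun hc => by have := piApInj π hc; omega
      have d23 : (π ⟨2, by omega⟩:ℕ) ≠ (π ⟨3, by omega⟩:ℕ) := fun hc => by have := piApInj π hc; omega
      have n1 := hne0 1 (by omega) (by omega)
      have n2 := hne0 2 (by omega) (by omega)
      have n3 := hne0 3 (by omega) (by omega)
      omega
  obtain ⟨j1, hj1, hj1a, hj1b, e1⟩ := hsmall 1 (by omega) (by omega)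
  obtain ⟨j2, hj2, hj2a, hj2b, e2⟩ := hsmall 2 (by omega) (by omega)
  obtain ⟨j3, hj3, hj3a, hj3b, e3⟩ := hsmall 3 (by omega) (by omega)
  have dj12 : j1 ≠ j2 := fun hc => by rw [piApCongr π hj1 hj2 hc] at e1; omega
  have dj13 : j1 ≠ j3 := fun hc => by rw [piApCongr π hj1 hj3 hc] at e1; omega
  have dj23 : j2 ≠ j3 := fun hc => by rw [piApCongr π hj2 hj3 hc] at e2; omega
  have hval : ∀ (a : ℕ) (ha1 : 1 ≤ a) (ha3 : a ≤ 3) (ha : a < 3*n),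
      (π ⟨a,ha⟩:ℕ) = 1 ∨ (π ⟨a,ha⟩:ℕ) = 2 ∨ (π ⟨a,ha⟩:ℕ) = 3 := by
    intro a ha1 ha3 ha
    rcases (by omega : a = j1 ∨ a = j2 ∨ a = j3) with hc|hc|hc
    · left; rw [piApCongr π ha hj1 hc]; exact e1
    · right; left; rw [piApCongr π ha hj2 hc]; exact e2
    · right; right; rw [piApCongr π ha hj3 hc]; exact e3
  have hv1 := hval 1 (by omega) (by omega) (by omega)
  have hv2 := hval 2 (by omega) (by omega) (by omega)
  have hv3 := hval 3 (by omega) (by omega) (by omega)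
  have d12 : (π ⟨1, by omega⟩:ℕ) ≠ (π ⟨2, by omega⟩:ℕ) := fun hc => by have := piApInj π hc; omega
  have d13 : (π ⟨1, by omega⟩:ℕ) ≠ (π ⟨3, by omega⟩:ℕ) := fun hc => by have := piApInj π hc; omega
  have d23 : (π ⟨2, by omega⟩:ℕ) ≠ (π ⟨3, by omega⟩:ℕ) := fun hc => by have := piApInj π hc; omega
  have h13 : (π ⟨1, by omega⟩:ℕ) < (π ⟨3, by omega⟩:ℕ) := hQ' 1 3 (by omega) (by omega) (by omega)
  have tail4 : ∀ (k : ℕ) (hk : k < 3*n), 4 ≤ k → 4 ≤ (π ⟨k,hk⟩:ℕ) := by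
    intro k hk k4
    have := h4 k hk k4
    omega
  -- choose τ
  obtain ⟨τ, hτ3, t1, t2, t3⟩ : ∃ τ : Equiv.Perm (Fin 3),
      (τ = Equiv.refl (Fin 3) ∨ τ = Equiv.swap 1 2 ∨ τ = Equiv.swap 0 1) ∧
      (τ 0 : ℕ) + 1 = (π ⟨1, by omega⟩:ℕ) ∧ (τ 1 : ℕ) + 1 = (π ⟨2, by omega⟩:ℕ) ∧
      (τ 2 : ℕ) + 1 = (π ⟨3, by omega⟩:ℕ) := by
    have htriple :
        ((π ⟨1, by omega⟩:ℕ) = 1 ∧ (π ⟨2, by omega⟩:ℕ) = 2 ∧ (π ⟨3, by omega⟩:ℕ) = 3) ∨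
        ((π ⟨1, by omega⟩:ℕ) = 1 ∧ (π ⟨2, by omega⟩:ℕ) = 3 ∧ (π ⟨3, by omega⟩:ℕ) = 2) ∨
        ((π ⟨1, by omega⟩:ℕ) = 2 ∧ (π ⟨2, by omega⟩:ℕ) = 1 ∧ (π ⟨3, by omega⟩:ℕ) = 3) := by
      rcases hv1 with a1|a1|a1 <;> rcases hv2 with a2|a2|a2 <;> rcases hv3 with a3|a3|a3 <;> omega
    rcases htriple with ⟨a,b,c⟩ | ⟨a,b,c⟩ | ⟨a,b,c⟩
    · refine ⟨Equiv.refl (Fin 3), Or.inl rfl, ?_, ?_, ?_⟩ <;>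
        [(have : ((Equiv.refl (Fin 3)) 0 : ℕ) = 0 := by decide);
         (have : ((Equiv.refl (Fin 3)) 1 : ℕ) = 1 := by decide);
         (have : ((Equiv.refl (Fin 3)) 2 : ℕ) = 2 := by decide)] <;> omega
    · refine ⟨Equiv.swap 1 2, Or.inr (Or.inl rfl), ?_, ?_, ?_⟩ <;>
        [(have : ((Equiv.swap 1 2 : Equiv.Perm (Fin 3)) 0 : ℕ) = 0 := by decide);
         (have : ((Equiv.swap 1 2 : Equiv.Perm (Fin 3)) 1 : ℕ) = 2 := by decide);
         (have : ((Equiv.swap 1 2 : Equiv.Perm (Fin 3)) 2 : ℕ) = 1 := by decide)] <;> omega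
    · refine ⟨Equiv.swap 0 1, Or.inr (Or.inr rfl), ?_, ?_, ?_⟩ <;>
        [(have : ((Equiv.swap 0 1 : Equiv.Perm (Fin 3)) 0 : ℕ) = 1 := by decide);
         (have : ((Equiv.swap 0 1 : Equiv.Perm (Fin 3)) 1 : ℕ) = 0 := by decide);
         (have : ((Equiv.swap 0 1 : Equiv.Perm (Fin 3)) 2 : ℕ) = 2 := by decide)] <;> omega
  -- construct π'
  have gposN : ∀ (a b : ℕ) (haM : a < 3*(n-1)) (ha0 : a ≠ 0) (hb : b < 3*n) (hab : b = a+3),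
      1 ≤ (gfun n hn π ⟨a, haM⟩ : ℕ) ∧ (gfun n hn π ⟨a, haM⟩ : ℕ) + 3 = (π ⟨b, hb⟩ : ℕ) := by
    intro a b haM ha0 hb hab
    have h4' := tail4 b hb (by omega)
    have := gfun_valpos n hn π a b haM ha0 hb hab
    constructor <;> omega
  have hginj : Function.Injective (gfun n hn π) := by
    intro x y hxy
    obtain ⟨a, haM⟩ := x
    obtain ⟨b, hbM⟩ := y
    have hv : (gfun n hn π ⟨a, haM⟩ : ℕ) = (gfun n hn π ⟨b, hbM⟩ : ℕ) := congrArg Fin.val hxy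
    apply Fin.ext
    show a = b
    by_cases ha : a = 0 <;> by_cases hb : b = 0
    · omega
    · have u := gfun_val0 n hn π a haM ha
      have v := (gposN b (b+3) hbM hb (by omega) rfl).1
      omega
    · have u := gfun_val0 n hn π b hbM hb
      have v := (gposN a (a+3) haM ha (by omega) rfl).1
      omega
    · have u := (gposN a (a+3) haM ha (by omega) rfl).2
      have v := (gposN b (b+3) hbM hb (by omega) rfl).2
      have huv : (π ⟨a+3, by omega⟩ : ℕ) = (π ⟨b+3, by omega⟩ : ℕ) := by omega
      have := piApInj π huv
      omega
  have hbij := Finite.injective_iff_bijective.mp hginj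
  have hπ'app : ∀ (a : ℕ) (haM : a < 3*(n-1)),
      ((Equiv.ofBijective _ hbij) ⟨a, haM⟩ : ℕ) = (gfun n hn π ⟨a, haM⟩ : ℕ) :=
    fun a haM => rfl
  refine ⟨τ, hτ3, Equiv.ofBijective _ hbij, ?_, h0, ?_, ?_⟩
  · apply (inShrub_iff (n-1) _).mpr
    constructor
    · intro i k hik
      obtain ⟨iv, hiv⟩ := i
      obtain ⟨kv, hkv⟩ := k
      rw [fin_val_mk, fin_val_mk] at hik
      rw [hπ'app, hπ'app]
      have hk0 : kv ≠ 0 := by omega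
      have gk := gposN kv (kv+3) hkv hk0 (by omega) rfl
      by_cases hi : iv = 0
      · have := gfun_val0 n hn π iv hiv hi
        omega
      · have gi := gposN iv (iv+3) hiv hi (by omega) rfl
        have := hQ' (iv+3) (kv+3) (by omega) (by omega) (by omega)
        omega
    · intro i h
      constructor <;> rw [Fin.lt_def]
      · rw [hπ'app, hπ'app]
        rcases Nat.eq_zero_or_pos i with rfl | hi
        · have u := gfun_val0 n hn π (3*0) (by omega) (by omega)
          have v := (gposN (3*0+1) (3*0+1+3) (by omega) (by omega) (by omega) rfl).1
          omega
        · have u := (gposN (3*i) (3*(i+1)) (by omega) (by omega) (by omega) (by ring)).2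
          have v := (gposN (3*i+1) (3*(i+1)+1) (by omega) (by omega) (by omega) (by ring)).2
          have w := (hBn (i+1) (by omega) (by omega) (by omega)).1
          omega
      · rw [hπ'app, hπ'app]
        rcases Nat.eq_zero_or_pos i with rfl | hi
        · have u := gfun_val0 n hn π (3*0) (by omega) (by omega)
          have v := (gposN (3*0+2) (3*0+2+3) (by omega) (by omega) (by omega) rfl).1
          omega
        · have u := (gposN (3*i) (3*(i+1)) (by omega) (by omega) (by omega) (by ring)).2
          have v := (gposN (3*i+2) (3*(i+1)+2) (by omega) (by omega) (by omega) (by ring)).2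
          have w := (hBn (i+1) (by omega) (by omega) (by omega)).2
          omega
  · intro a
    fin_cases a
    · exact (piApCongr π (by omega) (by omega)
        (show ((0 : Fin 3):ℕ)+1 = 1 by decide)).trans t1.symm
    · exact (piApCongr π (by omega) (by omega)
        (show ((1 : Fin 3):ℕ)+1 = 2 by decide)).trans t2.symm
    · exact (piApCongr π (by omega) (by omega)
        (show ((2 : Fin 3):ℕ)+1 = 3 by decide)).trans t3.symm
  · intro j hj1' hj2'
    rw [hπ'app]
    have := (gposN j (j+3) hj2' (by omega) (by omega) rfl).2
    omega

lemma backward_n2 (n : ℕ) (hn : 2 ≤ n) (π : Equiv.Perm (Fin (3 * n)))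
    (τ : Equiv.Perm (Fin 3))
    (hτ3 : τ = Equiv.refl (Fin 3) ∨ τ = Equiv.swap 1 2 ∨ τ = Equiv.swap 0 1)
    (π' : Equiv.Perm (Fin (3 * (n - 1)))) (hπ's : InShrub (n - 1) π')
    (h0 : (π ⟨0, by have := π; omega⟩ : ℕ) = 0)
    (hτ : ∀ a : Fin 3, (π ⟨(a : ℕ) + 1, Nat.lt_of_lt_of_le (Nat.succ_lt_succ a.isLt) (by omega)⟩ : ℕ) = (τ a : ℕ) + 1)
    (htail : ∀ (j : ℕ) (hj1 : 1 ≤ j) (hj2 : j < 3 * (n - 1)),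
      (π ⟨j + 3, by have := π; omega⟩ : ℕ) = (π' ⟨j, hj2⟩ : ℕ) + 3) :
    InShrub n π := by
  have hτv : ((τ 0 : ℕ) = 0 ∧ (τ 1 : ℕ) = 1 ∧ (τ 2 : ℕ) = 2) ∨
             ((τ 0 : ℕ) = 0 ∧ (τ 1 : ℕ) = 2 ∧ (τ 2 : ℕ) = 1) ∨
             ((τ 0 : ℕ) = 1 ∧ (τ 1 : ℕ) = 0 ∧ (τ 2 : ℕ) = 2) := by
    rcases hτ3 with rfl | rfl | rfl
    · exact Or.inl ⟨by decide, by decide, by decide⟩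
    · exact Or.inr (Or.inl ⟨by decide, by decide, by decide⟩)
    · exact Or.inr (Or.inr ⟨by decide, by decide, by decide⟩)
  have e1' : (π ⟨1, by omega⟩ : ℕ) = (τ 0 : ℕ) + 1 :=
    (piApCongr π (by omega) (by omega) (by decide : (1:ℕ) = ((0 : Fin 3):ℕ)+1)).trans (hτ 0)
  have e2' : (π ⟨2, by omega⟩ : ℕ) = (τ 1 : ℕ) + 1 :=
    (piApCongr π (by omega) (by omega) (by decide : (2:ℕ) = ((1 : Fin 3):ℕ)+1)).trans (hτ 1)
  have e3' : (π ⟨3, by omega⟩ : ℕ) = (τ 2 : ℕ) + 1 :=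
    (piApCongr π (by omega) (by omega) (by decide : (3:ℕ) = ((2 : Fin 3):ℕ)+1)).trans (hτ 2)
  obtain ⟨hQ'', hB''⟩ := (inShrub_iff (n-1) π').mp hπ's
  have hQ'n : ∀ (a b : ℕ) (ha : a < 3*(n-1)) (hb : b < 3*(n-1)), a + 2 ≤ b →
      (π' ⟨a,ha⟩ : ℕ) < (π' ⟨b,hb⟩ : ℕ) := fun a b ha hb h => hQ'' ⟨a,ha⟩ ⟨b,hb⟩ h
  have hB'n : ∀ (i : ℕ) (h2 : 3*i+2 < 3*(n-1)) (ha : 3*i < 3*(n-1)) (hb : 3*i+1 < 3*(n-1)),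
      (π' ⟨3*i, ha⟩:ℕ) < (π' ⟨3*i+1, hb⟩:ℕ) ∧ (π' ⟨3*i, ha⟩:ℕ) < (π' ⟨3*i+2, h2⟩:ℕ) := by
    intro i h2 ha hb
    exact ⟨Fin.lt_def.mp (hB'' i h2).1, Fin.lt_def.mp (hB'' i h2).2⟩
  have h0' : (π' ⟨0, by omega⟩ : ℕ) = 0 := val_zero (by omega) π' hπ's (by omega)
  have hπ'pos : ∀ (a : ℕ) (ha : a < 3*(n-1)), a ≠ 0 → 1 ≤ (π' ⟨a, ha⟩ : ℕ) := by
    intro a ha ha0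
    rcases Nat.eq_zero_or_pos (π' ⟨a, ha⟩ : ℕ) with hz | hz
    · exact absurd (piApInj π' (hz.trans h0'.symm)) ha0
    · exact hz
  have tailval : ∀ (k : ℕ) (hk : k < 3*n), 4 ≤ k → ∀ (hk' : k-3 < 3*(n-1)),
      (π ⟨k, hk⟩ : ℕ) = (π' ⟨k-3, hk'⟩ : ℕ) + 3 := by
    intro k hk k4 hk'
    exact (piApCongr π hk (by omega) (by omega)).trans (htail (k-3) (by omega) hk')
  have tail4' : ∀ (k : ℕ) (hk : k < 3*n), 4 ≤ k → 4 ≤ (π ⟨k,hk⟩:ℕ) := by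
    intro k hk k4
    have h1 := tailval k hk k4 (by omega)
    have h2 := hπ'pos (k-3) (by omega) (by omega)
    omega
  apply (inShrub_iff n π).mpr
  constructor
  · intro i k hik
    obtain ⟨iv, hiv⟩ := i
    obtain ⟨kv, hkv⟩ := k
    rw [fin_val_mk, fin_val_mk] at hik
    show (π ⟨iv, hiv⟩ : ℕ) < (π ⟨kv, hkv⟩ : ℕ)
    rcases (by omega : iv = 0 ∨ (1 ≤ iv ∧ iv ≤ 3) ∨ 4 ≤ iv) with rfl | ⟨hi1, hi3⟩ | hi4
    · have hk0 : (π ⟨kv, hkv⟩ : ℕ) ≠ 0 := fun hc => by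
        have := piApInj π (hc.trans h0.symm); omega
      omega
    · rcases (by omega : kv ≤ 3 ∨ 4 ≤ kv) with hk3 | hk4
      · obtain ⟨rfl, rfl⟩ : iv = 1 ∧ kv = 3 := by omega
        rcases hτv with ⟨a,b,c⟩|⟨a,b,c⟩|⟨a,b,c⟩ <;> omega
      · have h4k := tail4' kv hkv hk4
        rcases (by omega : iv = 1 ∨ iv = 2 ∨ iv = 3) with rfl|rfl|rfl <;>
          rcases hτv with ⟨a,b,c⟩|⟨a,b,c⟩|⟨a,b,c⟩ <;> omega
    · have l1 := tailval iv hiv (by omega) (by omega)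
      have l2 := tailval kv hkv (by omega) (by omega)
      have := hQ'n (iv-3) (kv-3) (by omega) (by omega) (by omega)
      omega
  · intro i h
    constructor <;> rw [Fin.lt_def]
    · rcases (by omega : i = 0 ∨ i = 1 ∨ 2 ≤ i) with rfl | rfl | hi2
      · have u := piApCongr π (show 3*0 < 3*n by omega) (show 0 < 3*n by omega) (by omega)
        have v := piApCongr π (show 3*0+1 < 3*n by omega) (show (1:ℕ) < 3*n by omega) (by omega)
        omega
      · have u := piApCongr π (show 3*1 < 3*n by omega) (show (3:ℕ) < 3*n by omega) (by omega)
        have v := piApCongr π (show 3*1+1 < 3*n by omega) (show (4:ℕ) < 3*n by omega) (by omega)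
        have w := tail4' 4 (by omega) (by omega)
        rcases hτv with ⟨a,b,c⟩|⟨a,b,c⟩|⟨a,b,c⟩ <;> omega
      · have l0 := tailval (3*i) (by omega) (by omega) (by omega)
        have l1 := tailval (3*i+1) (by omega) (by omega) (by omega)
        have b0 := piApCongr π' (show 3*(i-1) < 3*(n-1) by omega)
          (show 3*i-3 < 3*(n-1) by omega) (by omega)
        have b1 := piApCongr π' (show 3*(i-1)+1 < 3*(n-1) by omega)
          (show 3*i+1-3 < 3*(n-1) by omega) (by omega)
        have w := (hB'n (i-1) (by omega) (by omega) (by omega)).1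
        omega
    · rcases (by omega : i = 0 ∨ i = 1 ∨ 2 ≤ i) with rfl | rfl | hi2
      · have u := piApCongr π (show 3*0 < 3*n by omega) (show 0 < 3*n by omega) (by omega)
        have v := piApCongr π (show 3*0+2 < 3*n by omega) (show (2:ℕ) < 3*n by omega) (by omega)
        omega
      · have u := piApCongr π (show 3*1 < 3*n by omega) (show (3:ℕ) < 3*n by omega) (by omega)
        have v := piApCongr π (show 3*1+2 < 3*n by omega) (show (5:ℕ) < 3*n by omega) (by omega)
        have w := tail4' 5 (by omega) (by omega)
        rcases hτv with ⟨a,b,c⟩|⟨a,b,c⟩|⟨a,b,c⟩ <;> omega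
      · have l0 := tailval (3*i) (by omega) (by omega) (by omega)
        have l1 := tailval (3*i+2) (by omega) (by omega) (by omega)
        have b0 := piApCongr π' (show 3*(i-1) < 3*(n-1) by omega)
          (show 3*i-3 < 3*(n-1) by omega) (by omega)
        have b1 := piApCongr π' (show 3*(i-1)+2 < 3*(n-1) by omega)
          (show 3*i+2-3 < 3*(n-1) by omega) (by omega)
        have w := (hB'n (i-1) (by omega) (by omega) (by omega)).2
        omega


theorem stmt_6 :
    (∀ π : Equiv.Perm (Fin (3 * 1)),
      InShrub 1 π ↔ ((∀ i, π i = i) ∨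
        ∀ i : Fin (3 * 1), (π i : ℕ) =
          if (i : ℕ) = 0 then 0 else if (i : ℕ) = 1 then 2 else 1)) ∧
    ∀ n : ℕ, ∀ hn : 2 ≤ n, ∀ π : Equiv.Perm (Fin (3 * n)),
      InShrub n π ↔
        ∃ τ : Equiv.Perm (Fin 3),
          (τ = Equiv.refl (Fin 3) ∨ τ = Equiv.swap 1 2 ∨ τ = Equiv.swap 0 1) ∧
          ∃ π' : Equiv.Perm (Fin (3 * (n - 1))), InShrub (n - 1) π' ∧
            (π ⟨0, by omega⟩ : ℕ) = 0 ∧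
            (∀ a : Fin 3, (π ⟨(a : ℕ) + 1, by have := a.isLt; omega⟩ : ℕ) = (τ a : ℕ) + 1) ∧
            ∀ (j : ℕ) (hj1 : 1 ≤ j) (hj2 : j < 3 * (n - 1)),
              (π ⟨j + 3, by omega⟩ : ℕ) = (π' ⟨j, hj2⟩ : ℕ) + 3 := by
  constructor
  · exact case_n1
  · intro n hn π
    constructor
    · exact forward_n2 n hn π
    · rintro ⟨τ, hτ3, π', hπ's, h0, hτ, htail⟩
      exact backward_n2 n hn π τ hτ3 π' hπ's h0 hτ htail
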